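/- arXiv:1505.06234 — 3 statements merged into one kernel-verified Lean document; each statement's English description precedes it below -/
import Mathlib

section
/- For every positive integer c, there exists a positive integer n(c) such that the Mycielski graph M_{n(c)} has path-chromatic number larger than c. -/
open SimpleGraph

universe u
variable {V : Type u}

/-- Closed neighborhood of a vertex set. -/
def closedNbhd (G : SimpleGraph V) (U : Set V) : Set V :=
  U ∪ {v | ∃ u ∈ U, G.Adj u v}

/-- Bag `X_ℓ = N[{v_1,…,v_ℓ}] \ {v_1,…,v_{ℓ-1}}` of the enumeration `σ`. -/
def bagX {n : ℕ} (G : SimpleGraph V) (σ : Fin n ≃ V) (ℓ : Fin n) : Set V :=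
  closedNbhd G {v | ∃ j ≤ ℓ, v = σ j} \ {v | ∃ j < ℓ, v = σ j}

/-- Chromatic number of the subgraph induced by `S`. -/
noncomputable def chrom (G : SimpleGraph V) (S : Set V) : ℕ :=
  sInf {k | (G.induce S).Colorable k}

/-- Chromatic number of the path-decomposition `P_σ^G`. -/
noncomputable def decompChrom {n : ℕ} (G : SimpleGraph V) (σ : Fin n ≃ V) : ℕ :=
  sInf {k | ∀ ℓ, (G.induce (bagX G σ ℓ)).Colorable k}

/-- `B` is a path-decomposition of `G`. -/
def IsPathDecomp (G : SimpleGraph V) {s : ℕ} (B : Fin s → Set V) : Prop :=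
  (∀ v, ∃ t, v ∈ B t) ∧
  (∀ u v, G.Adj u v → ∃ t, u ∈ B t ∧ v ∈ B t) ∧
  (∀ v (t₁ t₂ t₃ : Fin s), t₁ ≤ t₂ → t₂ ≤ t₃ → v ∈ B t₁ → v ∈ B t₃ → v ∈ B t₂)

/-- Path-chromatic number. -/
noncomputable def pathChromatic (G : SimpleGraph V) : ℕ :=
  sInf {k | ∃ (s : ℕ) (B : Fin s → Set V), IsPathDecomp G B ∧
    ∀ t, (G.induce (B t)).Colorable k}

/-- `(T, B)` is a tree-decomposition of `G`. -/
def IsTreeDecomp {ι : Type u} (G : SimpleGraph V) (T : SimpleGraph ι) (B : ι → Set V) : Prop :=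
  T.IsTree ∧
  (∀ v, ∃ t, v ∈ B t) ∧
  (∀ u v, G.Adj u v → ∃ t, u ∈ B t ∧ v ∈ B t) ∧
  (∀ v, (T.induce {t | v ∈ B t}).Connected)

/-- Tree-chromatic number. -/
noncomputable def treeChromatic (G : SimpleGraph V) : ℕ :=
  sInf {k | ∃ (ι : Type u) (T : SimpleGraph ι) (B : ι → Set V),
    IsTreeDecomp G T B ∧ ∀ t, (G.induce (B t)).Colorable k}

/-- A special enumeration. -/
def IsSpecial {n : ℕ} (G : SimpleGraph V) (σ : Fin n ≃ V) : Prop :=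
  decompChrom G σ = pathChromatic G ∧
  ∀ i : Fin n, chrom G (bagX G σ i) = pathChromatic G →
    ∀ j : Fin n, j < i → ¬ G.Adj (σ j) (σ i)

/-- The graph `R_m(G)`; the vertex `(i, none)` plays the role of `(i, v₀)`. -/
def Rm (G : SimpleGraph V) (m : ℕ) : SimpleGraph (Fin m × Option V) :=
  SimpleGraph.fromRel (fun p q =>
    (p.1 = q.1 ∧ p.2 = none) ∨
    (p.1 ≠ q.1 ∧ ∃ u v, p.2 = some u ∧ q.2 = some v ∧ G.Adj u v))

/-- `[I, U] = { (i, v) : i ∈ I, v ∈ U }` inside `R_m(G)`. -/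
def box {m : ℕ} (I : Set (Fin m)) (U : Set V) : Set (Fin m × Option V) :=
  {p | p.1 ∈ I ∧ ∃ v ∈ U, p.2 = some v}

/-- Index of the first vertex in the enumeration `μ` satisfying `P`. -/
noncomputable def firstIdx {N : ℕ} {W : Type*} (μ : Fin N ≃ W) (P : W → Prop) : ℕ :=
  sInf {ℓ : ℕ | ∃ h : ℓ < N, P (μ ⟨ℓ, h⟩)}

/-- The cycle `C_n`: `v_j ~ v_{j'}` iff `|j - j'| ∈ {1, n-1}`. -/
def cyc (n : ℕ) : SimpleGraph (Fin n) :=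
  SimpleGraph.fromRel (fun a b => (b : ℕ) - (a : ℕ) = 1 ∨ (b : ℕ) - (a : ℕ) = n - 1)

/-- The Mycielskian of a graph. -/
def mycielskian (G : SimpleGraph V) : SimpleGraph (Option (V ⊕ V)) :=
  SimpleGraph.fromRel (fun a b =>
    match a, b with
    | some (Sum.inl u), some (Sum.inl v) => G.Adj u v
    | some (Sum.inr u), some (Sum.inl v) => G.Adj u v
    | none, some (Sum.inr _) => True
    | _, _ => False)

/-- Vertex types and graphs of the Mycielski family: `MycS 2` is a single edge. -/
def MycS : ℕ → Σ W : Type, SimpleGraph W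
  | 0 => ⟨Empty, ⊥⟩
  | 1 => ⟨Empty, ⊥⟩
  | 2 => ⟨Fin 2, ⊤⟩
  | (n + 3) => ⟨Option ((MycS (n + 2)).1 ⊕ (MycS (n + 2)).1), mycielskian (MycS (n + 2)).2⟩

/-- The vertex type of the `k`-Mycielski graph. -/
def MycV (k : ℕ) : Type := (MycS k).1

/-- The `k`-Mycielski graph `M_k`. -/
def Myc (k : ℕ) : SimpleGraph (MycV k) := (MycS k).2
namespace Aux

def mycFintype : (k : ℕ) → Fintype (MycV k)
  | 0 => inferInstanceAs (Fintype Empty)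
  | 1 => inferInstanceAs (Fintype Empty)
  | 2 => inferInstanceAs (Fintype (Fin 2))
  | (n+3) =>
    letI := mycFintype (n+2)
    inferInstanceAs (Fintype (Option (MycV (n+2) ⊕ MycV (n+2))))

instance instMycFintype (k : ℕ) : Fintype (MycV k) := mycFintype k

def mycDecEq : (k : ℕ) → DecidableEq (MycV k)
  | 0 => inferInstanceAs (DecidableEq Empty)
  | 1 => inferInstanceAs (DecidableEq Empty)
  | 2 => inferInstanceAs (DecidableEq (Fin 2))
  | (n+3) =>
    letI := mycDecEq (n+2)
    inferInstanceAs (DecidableEq (Option (MycV (n+2) ⊕ MycV (n+2))))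

instance instMycDecEq (k : ℕ) : DecidableEq (MycV k) := mycDecEq k

open Function

section Basics

variable {α : Type*} {β : Type*} {H : SimpleGraph α} {G : SimpleGraph β}

/-- neighbours of a set -/
def nbr (G : SimpleGraph β) (S : Set β) : Set β := {v | ∃ u ∈ S, G.Adj u v}

lemma colorable_of_hom (F : H →g G) {k : ℕ} (h : G.Colorable k) : H.Colorable k := by
  obtain ⟨C⟩ := h
  exact ⟨SimpleGraph.Coloring.mk (fun v => C (F v)) (fun hadj => C.valid (F.map_adj hadj))⟩

lemma colorable_induce_of_hom (F : H →g G) {S : Set β} (hS : ∀ v, F v ∈ S) {k : ℕ}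
    (h : (G.induce S).Colorable k) : H.Colorable k := by
  obtain ⟨C⟩ := h
  refine ⟨SimpleGraph.Coloring.mk (fun v => C ⟨F v, hS v⟩) (fun {u v} hadj => C.valid ?_)⟩
  exact F.map_adj hadj

lemma colorable_induce_empty (G : SimpleGraph β) (t : ℕ) :
    (G.induce (∅ : Set β)).Colorable t :=
  ⟨SimpleGraph.Coloring.mk (fun v => (Set.notMem_empty _ v.2).elim)
    (fun {u v} _ => (Set.notMem_empty _ u.2).elim)⟩

lemma colorable_univ_iff (G : SimpleGraph β) (t : ℕ) :
    (G.induce (Set.univ : Set β)).Colorable t ↔ G.Colorable t := by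
  constructor
  · intro h
    exact colorable_induce_of_hom (G := G) (H := G) (Hom.id) (fun v => Set.mem_univ v) h
  · intro h
    exact colorable_of_hom ⟨Subtype.val, fun {a b} hab => hab⟩ h

end Basics

section Myc

variable {α : Type*} {H : SimpleGraph α}

lemma myc_adj_base {u v : α} (h : H.Adj u v) :
    (mycielskian H).Adj (some (Sum.inl u)) (some (Sum.inl v)) := by
  refine (SimpleGraph.fromRel_adj _ _ _).mpr ⟨?_, Or.inl h⟩
  simp [h.ne]

lemma myc_adj_shadow {u v : α} (h : H.Adj u v) :
    (mycielskian H).Adj (some (Sum.inr u)) (some (Sum.inl v)) := by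
  refine (SimpleGraph.fromRel_adj _ _ _).mpr ⟨?_, Or.inl h⟩
  simp

lemma myc_adj_apex (u : α) :
    (mycielskian H).Adj none (some (Sum.inr u)) := by
  refine (SimpleGraph.fromRel_adj _ _ _).mpr ⟨?_, Or.inl trivial⟩
  simp

/-- The classic Mycielski argument. -/
lemma mycielskian_colorable {k : ℕ} (h : (mycielskian H).Colorable (k+1)) :
    H.Colorable k := by
  obtain ⟨C⟩ := h
  set c0 : Fin (k+1) := C none with hc0
  set ψ : α → Fin (k+1) := fun v =>
    if C (some (Sum.inl v)) = c0 then C (some (Sum.inr v)) else C (some (Sum.inl v)) with hψ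
  have hne : ∀ v, ψ v ≠ c0 := by
    intro v
    by_cases hv : C (some (Sum.inl v)) = c0
    · simp only [hψ, hv, if_pos]
      exact fun hcon => (C.valid (myc_adj_apex v)) (hcon.symm ▸ rfl)
    · simp only [hψ, hv, if_neg, not_false_iff]
      exact hv
  have hproper : ∀ {u v}, H.Adj u v → ψ u ≠ ψ v := by
    intro u v huv
    by_cases hu : C (some (Sum.inl u)) = c0 <;> by_cases hv : C (some (Sum.inl v)) = c0
    · exact absurd (hu.trans hv.symm) (C.valid (myc_adj_base huv))
    · simp only [hψ, hu, hv, if_pos, if_neg, not_false_iff]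
      exact C.valid (myc_adj_shadow huv)
    · simp only [hψ, hu, hv, if_pos, if_neg, not_false_iff]
      exact (C.valid (myc_adj_shadow huv.symm)).symm
    · simp only [hψ, hu, hv, if_neg, not_false_iff]
      exact C.valid (myc_adj_base huv)
  -- now remove the color c0
  classical
  have hex : ∀ v, ∃ j : Fin k, c0.succAbove j = ψ v := fun v => Fin.exists_succAbove_eq (hne v)
  refine ⟨SimpleGraph.Coloring.mk (fun v => Classical.choose (hex v)) ?_⟩
  intro u v huv hcon
  apply hproper huv
  have h1 := Classical.choose_spec (hex u)
  have h2 := Classical.choose_spec (hex v)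
  rw [← h1, ← h2, hcon]

end Myc

section RmFacts

variable {α : Type u} {G : SimpleGraph α} {m : ℕ}

lemma rm_adj_apex (j : Fin m) (v : α) : (Rm G m).Adj (j, none) (j, some v) := by
  refine (SimpleGraph.fromRel_adj _ _ _).mpr ⟨?_, Or.inl (Or.inl ⟨rfl, rfl⟩)⟩
  simp

lemma rm_adj_cross {i j : Fin m} {u v : α} (hij : i ≠ j) (h : G.Adj u v) :
    (Rm G m).Adj (i, some u) (j, some v) := by
  refine (SimpleGraph.fromRel_adj _ _ _).mpr ⟨?_, Or.inl (Or.inr ⟨hij, u, v, rfl, rfl, h⟩)⟩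
  intro hcon
  exact hij (congrArg Prod.fst hcon)

open Function

/-- transfer of non-colorability through a system of distinct representatives. -/
lemma notCol_sdr {Wv : Set α} {k : ℕ} (S : Set (Fin m × Option α)) (ρ : Wv → Fin m)
    (hρ : Injective ρ) (hmem : ∀ w : Wv, ((ρ w, some (w : α)) : Fin m × Option α) ∈ S)
    (hW : ¬ (G.induce Wv).Colorable k) : ¬ ((Rm G m).induce S).Colorable k := by
  intro h
  apply hW
  refine colorable_induce_of_hom (H := G.induce Wv) (G := Rm G m)
    ⟨fun w => (ρ w, some (w : α)), ?_⟩ hmem h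
  intro w w' hww
  have hne : w ≠ w' := by
    intro hcon; subst hcon; exact (G.loopless.irrefl _ hww)
  exact rm_adj_cross (fun hcon => hne (hρ hcon)) hww

/-- transfer of non-colorability through an induced Mycielskian configuration. -/
lemma notCol_myc {Wv : Set α} {k : ℕ} (S : Set (Fin m × Option α)) (j : Fin m)
    (ρ : Wv → Fin m) (hρ : Injective ρ) (hρj : ∀ w, ρ w ≠ j)
    (hbase : ∀ w : Wv, ((ρ w, some (w : α)) : Fin m × Option α) ∈ S)
    (hshadow : ∀ w : Wv, ((j, some (w : α)) : Fin m × Option α) ∈ S)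
    (hapex : ((j, none) : Fin m × Option α) ∈ S)
    (hW : ¬ (G.induce Wv).Colorable k) : ¬ ((Rm G m).induce S).Colorable (k+1) := by
  intro h
  apply hW
  apply mycielskian_colorable (H := G.induce Wv)
  set F : Option (Wv ⊕ Wv) → Fin m × Option α := fun x =>
    match x with
    | none => (j, none)
    | some (Sum.inl w) => (ρ w, some (w : α))
    | some (Sum.inr w) => (j, some (w : α)) with hF
  have hFS : ∀ x, F x ∈ S := by
    rintro (_ | (w | w))
    · exact hapex
    · exact hbase w
    · exact hshadow w
  refine colorable_induce_of_hom (H := mycielskian (G.induce Wv)) (G := Rm G m)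
    ⟨F, ?_⟩ hFS h
  intro x y hxy
  have hxy' : x ≠ y ∧ _ := (SimpleGraph.fromRel_adj _ x y).mp hxy
  obtain ⟨hne, hrel⟩ := hxy'
  have hadjsub : ∀ (w w' : Wv), (G.induce Wv).Adj w w' → G.Adj (w : α) (w' : α) := by
    intro w w' h'; exact h'
  have hwne : ∀ (w w' : Wv), (G.induce Wv).Adj w w' → (w : α) ≠ (w' : α) := by
    intro w w' h'; exact (hadjsub w w' h').ne
  rcases x with _ | (w | w) <;> rcases y with _ | (w' | w')
  · exact absurd rfl hne
  · exact absurd hrel (by simp)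
  · -- apex ~ shadow
    exact rm_adj_apex j (w' : α)
  · exact absurd hrel (by simp)
  · -- base ~ base
    have hadj : (G.induce Wv).Adj w w' := by
      rcases hrel with h' | h'
      · exact h'
      · exact h'.symm
    have : (w : α) ≠ (w' : α) := hwne _ _ hadj
    refine rm_adj_cross ?_ (hadjsub _ _ hadj)
    intro hcon
    exact this (congrArg Subtype.val (hρ hcon))
  · -- base ~ shadow : rel (inl w) (inr w') is False, rel (inr w') (inl w) is Adj w' w
    have hadj : (G.induce Wv).Adj w' w := by
      rcases hrel with h' | h'
      · exact h'.elim
      · exact h'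
    exact (rm_adj_cross (fun hcon => (hρj w) hcon.symm) (hadjsub _ _ hadj)).symm
  · -- shadow ~ apex
    exact (rm_adj_apex j (w : α)).symm
  · -- shadow ~ base
    have hadj : (G.induce Wv).Adj w w' := by
      rcases hrel with h' | h'
      · exact h'
      · exact h'.elim
    exact rm_adj_cross (fun hcon => (hρj w') hcon.symm) (hadjsub _ _ hadj)
  · -- shadow ~ shadow : both rels False
    rcases hrel with h' | h' <;> exact h'.elim

end RmFacts

section Str

open Function

variable {α : Type*} [Fintype α] [DecidableEq α]

/-- prefix set of an enumeration -/
def preS (σ : Fin (Fintype.card α) ≃ α) (k : ℕ) : Set α := {v | ((σ.symm v : Fin _) : ℕ) ≤ k}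

/-- suffix set of an enumeration -/
def sfxS (σ : Fin (Fintype.card α) ≃ α) (k : ℕ) : Set α := {v | k ≤ ((σ.symm v : Fin _) : ℕ)}

/-- The key invariant: in every enumeration there is a position where the bag,
the suffix and the neighbourhood of the prefix all have large chromatic number. -/
def Str (G : SimpleGraph α) (a : ℕ) : Prop :=
  ∀ σ : Fin (Fintype.card α) ≃ α, ∃ k : ℕ,
    ¬ (G.induce (Aux.nbr G (preS σ k) ∩ sfxS σ k)).Colorable a ∧
    ¬ (G.induce (sfxS σ k)).Colorable (a+1) ∧
    ¬ (G.induce (Aux.nbr G (preS σ k))).Colorable (a+1)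

/-- a sorted enumeration with respect to an arbitrary key always exists -/
lemma exists_sorted_equiv (key : α → ℕ) :
    ∃ σ : Fin (Fintype.card α) ≃ α,
      ∀ i j : Fin (Fintype.card α), i ≤ j → key (σ i) ≤ key (σ j) := by
  classical
  set r : α → α → Prop := fun x y => key x ≤ key y with hr
  haveI : DecidableRel r := fun x y => by unfold r; infer_instance
  haveI : IsTotal α r := ⟨fun a b => le_total (key a) (key b)⟩
  haveI : IsTrans α r := ⟨fun a b c hab hbc => le_trans hab hbc⟩
  haveI : IsRefl α r := ⟨fun a => le_refl (key a)⟩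
  set l : List α := List.insertionSort r Finset.univ.toList with hl
  have hperm : l.Perm Finset.univ.toList := List.perm_insertionSort r _
  have hnd : l.Nodup := hperm.nodup_iff.mpr (Finset.nodup_toList _)
  have hmem : ∀ x : α, x ∈ l := fun x => hperm.mem_iff.mpr (Finset.mem_toList.mpr (Finset.mem_univ x))
  have hsorted : List.Pairwise r l := List.pairwise_insertionSort r _
  have hlen : l.length = Fintype.card α := by
    rw [hperm.length_eq, Finset.length_toList, Finset.card_univ]
  set e : Fin l.length ≃ α := hnd.getEquivOfForallMemList l hmem with he
  refine ⟨(finCongr hlen.symm).trans e, ?_⟩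
  intro i j hij
  have : ∀ i : Fin (Fintype.card α), ((finCongr hlen.symm).trans e) i = l.get (finCongr hlen.symm i) := by
    intro i; rfl
  rw [this i, this j]
  exact hsorted.rel_get_of_le (by simpa using hij)

end Str

section Helpers

open Function

lemma exists_inj_to_finset {β : Type*} [Fintype β] {m : ℕ} (C : Finset (Fin m))
    (h : Fintype.card β ≤ C.card) :
    ∃ ρ : β → Fin m, Injective ρ ∧ ∀ b, ρ b ∈ C := by
  classical
  set e1 := Fintype.equivFin β with he1
  set oi := C.orderIsoOfFin rfl with hoi
  refine ⟨fun b => (oi (Fin.castLE h (e1 b))).val, ?_, fun b => (oi _).2⟩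
  intro b b' hb
  apply e1.injective
  exact Fin.castLE_injective h (oi.injective (Subtype.val_injective hb))

lemma set_card_le {β : Type*} [Fintype β] (S : Set β) [Fintype S] :
    Fintype.card S ≤ Fintype.card β :=
  Fintype.card_le_of_injective Subtype.val Subtype.val_injective

end Helpers

section MRL

open Function Finset

variable {α : Type u} [Fintype α] [DecidableEq α]

theorem str_Rm (G : SimpleGraph α) (a : ℕ) (hStr : Str G a) (hChi : ¬ G.Colorable (a+2)) :
    Str (Rm G (4 * Fintype.card α + 20)) (a+1) := by
  classical
  set n := Fintype.card α with hn
  set m := 4 * n + 20 with hm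
  intro σR
  set VR := Fin m × Option α
  set pos : Fin m × Option α → ℕ := fun x => ((σR.symm x : Fin _) : ℕ) with hpos
  have pos_inj : ∀ {x y}, pos x = pos y → x = y := by
    intro x y hxy
    have : σR.symm x = σR.symm y := Fin.ext hxy
    exact σR.symm.injective this
  set cnt : α → ℕ → ℕ := fun v K => (univ.filter (fun j : Fin m => pos (j, some v) ≤ K)).card
    with hcnt
  have cnt_mono : ∀ v {K K'}, K ≤ K' → cnt v K ≤ cnt v K' := by
    intro v K K' hK
    exact card_le_card (filter_subset_filter _ (fun j hj => hj) |>.trans (by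
      intro j hj
      rw [mem_filter] at hj ⊢
      exact ⟨hj.1, hj.2.trans hK⟩))
  have cnt_exists : ∀ v, ∃ K, 2 ≤ cnt v K := by
    intro v
    refine ⟨Fintype.card (Fin m × Option α), ?_⟩
    have : univ.filter (fun j : Fin m => pos (j, some v) ≤ Fintype.card (Fin m × Option α)) = univ := by
      apply filter_true_of_mem
      intro j _
      exact le_of_lt (Fin.is_lt _)
    rw [hcnt]; simp only []; rw [this, card_univ, Fintype.card_fin]
    omega
  set e : α → ℕ := fun v => Nat.find (cnt_exists v) with he
  have he2 : ∀ v, 2 ≤ cnt v (e v) := fun v => Nat.find_spec (cnt_exists v)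
  have hemin : ∀ v K, K < e v → cnt v K ≤ 1 := by
    intro v K hK
    have := Nat.find_min (cnt_exists v) hK
    omega
  have card_pos_eq : ∀ (K : ℕ) (v : α),
      (univ.filter (fun j : Fin m => pos (j, some v) = K)).card ≤ 1 := by
    intro K v
    apply card_le_one.mpr
    intro j hj j' hj'
    rw [mem_filter] at hj hj'
    have := pos_inj (hj.2.trans hj'.2.symm)
    exact congrArg Prod.fst this
  have e_pos : ∀ v, 1 ≤ e v := by
    intro v
    by_contra hcon
    have h0 : e v = 0 := by omega
    have h2 := he2 v
    rw [h0] at h2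
    have : (univ.filter (fun j : Fin m => pos (j, some v) ≤ 0)) ⊆
        (univ.filter (fun j : Fin m => pos (j, some v) = 0)) := by
      intro j hj; rw [mem_filter] at hj ⊢; exact ⟨hj.1, Nat.le_zero.mp hj.2⟩
    have := (card_le_card this).trans (card_pos_eq 0 v)
    rw [hcnt] at h2; simp only [] at h2
    omega
  have exists_step : ∀ v, ∃ j : Fin m, pos (j, some v) = e v := by
    intro v
    by_contra hcon
    push_neg at hcon
    have hsub : (univ.filter (fun j : Fin m => pos (j, some v) ≤ e v)) ⊆
        (univ.filter (fun j : Fin m => pos (j, some v) ≤ e v - 1)) := by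
      intro j hj
      rw [mem_filter] at hj ⊢
      refine ⟨hj.1, ?_⟩
      have := hcon j
      omega
    have h1 : cnt v (e v) ≤ cnt v (e v - 1) := card_le_card hsub
    have h2 := hemin v (e v - 1) (by have := e_pos v; omega)
    have h3 := he2 v
    omega
  have cnt_step_le : ∀ v, cnt v (e v) ≤ cnt v (e v - 1) + 1 := by
    intro v
    have hsub : (univ.filter (fun j : Fin m => pos (j, some v) ≤ e v)) ⊆
        (univ.filter (fun j : Fin m => pos (j, some v) ≤ e v - 1)) ∪
        (univ.filter (fun j : Fin m => pos (j, some v) = e v)) := by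
      intro j hj
      rw [mem_filter] at hj
      rw [mem_union, mem_filter, mem_filter]
      rcases Nat.lt_or_ge (pos (j, some v)) (e v) with h | h
      · exact Or.inl ⟨hj.1, by omega⟩
      · exact Or.inr ⟨hj.1, by omega⟩
    calc cnt v (e v) ≤ _ := card_le_card hsub
    _ ≤ _ + _ := card_union_le _ _
    _ ≤ cnt v (e v - 1) + 1 := by
        have h1 := card_pos_eq (e v) v
        have h2 : cnt v (e v - 1) =
            (univ.filter (fun j : Fin m => pos (j, some v) ≤ e v - 1)).card := rfl
        omega
  have e_inj : Injective e := by
    intro v v' hvv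
    obtain ⟨j, hj⟩ := exists_step v
    obtain ⟨j', hj'⟩ := exists_step v'
    rw [hvv, ← hj'] at hj
    have := pos_inj hj
    exact Option.some_injective α (congrArg Prod.snd this)
  -- the derived enumeration of G
  obtain ⟨τ, hτ⟩ := exists_sorted_equiv (α := α) e
  obtain ⟨k, S1, S2, S3⟩ := hStr τ
  have hk : k < n := by
    by_contra hcon
    apply S2
    have hempty : sfxS τ k = ∅ := by
      ext v
      simp only [sfxS, Set.mem_setOf_eq, Set.mem_empty_iff_false, iff_false, not_le]
      calc ((τ.symm v : Fin _) : ℕ) < Fintype.card α := Fin.is_lt _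
      _ ≤ k := by omega
    rw [hempty]
    exact colorable_induce_empty G _
  set vK : α := τ ⟨k, hk⟩ with hvK
  set L : ℕ := e vK with hL
  have F1 : ∀ v ∈ preS τ k, 2 ≤ cnt v L := by
    intro v hv
    have h1 : (τ.symm v) ≤ (⟨k, hk⟩ : Fin n) := hv
    have h2 : e v ≤ e vK := by
      have := hτ _ _ h1
      simpa using this
    exact le_trans (he2 v) (cnt_mono v h2)
  have F2 : ∀ v ∈ sfxS τ k, cnt v L ≤ 2 := by
    intro v hv
    have h1 : (⟨k, hk⟩ : Fin n) ≤ (τ.symm v) := hv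
    have h2 : e vK ≤ e v := by
      have := hτ _ _ h1
      simpa using this
    rcases eq_or_lt_of_le h2 with heq | hlt
    · have hveq : vK = v := e_inj heq
      rw [← hveq]
      have h3 := cnt_step_le vK
      have h4 := hemin vK (e vK - 1) (by have := e_pos vK; omega)
      rw [hL]
      omega
    · have := hemin v L hlt
      omega
  -- the set of suffix types, and the virgin copies
  set sfxF : Finset α := univ.filter (fun v => k ≤ ((τ.symm v : Fin _) : ℕ)) with hsfxF
  have hsfxF_mem : ∀ v, v ∈ sfxF ↔ v ∈ sfxS τ k := by
    intro v
    rw [hsfxF, mem_filter]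
    simp only [mem_univ, true_and]
    rfl
  set Ω : Finset (Fin m) := univ.filter (fun j : Fin m => ∀ v ∈ sfxF, L < pos (j, some v))
    with hΩ
  have hΩcard : 2 * n + 20 ≤ Ω.card := by
    have hcompl : (univ.filter (fun j : Fin m => ¬ (∀ v ∈ sfxF, L < pos (j, some v)))) ⊆
        sfxF.biUnion (fun v => univ.filter (fun j : Fin m => pos (j, some v) ≤ L)) := by
      intro j hj
      rw [mem_filter] at hj
      push_neg at hj
      obtain ⟨v, hv1, hv2⟩ := hj.2
      rw [mem_biUnion]
      exact ⟨v, hv1, by rw [mem_filter]; exact ⟨mem_univ j, hv2⟩⟩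
    have h1 : (univ.filter (fun j : Fin m => ¬ (∀ v ∈ sfxF, L < pos (j, some v)))).card ≤
        2 * n := by
      calc _ ≤ (sfxF.biUnion (fun v => univ.filter (fun j : Fin m => pos (j, some v) ≤ L))).card :=
            card_le_card hcompl
      _ ≤ ∑ v ∈ sfxF, (univ.filter (fun j : Fin m => pos (j, some v) ≤ L)).card :=
            card_biUnion_le
      _ ≤ ∑ v ∈ sfxF, 2 := by
            apply Finset.sum_le_sum
            intro v hv
            exact F2 v ((hsfxF_mem v).mp hv)
      _ = 2 * sfxF.card := by rw [Finset.sum_const, smul_eq_mul, mul_comm]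
      _ ≤ 2 * n := by
            have : sfxF.card ≤ n := by
              calc sfxF.card ≤ (univ : Finset α).card := card_le_card (filter_subset _ _)
              _ = n := by rw [card_univ]
            omega
    have h2 := card_filter_add_card_filter_not
      (s := (univ : Finset (Fin m))) (fun j : Fin m => ∀ v ∈ sfxF, L < pos (j, some v))
    rw [card_univ, Fintype.card_fin] at h2
    rw [hΩ]
    omega
  -- the key adjacency fact
  have hdag : ∀ u ∈ Aux.nbr G (preS τ k), ∀ j : Fin m,
      ((j, some u) : Fin m × Option α) ∈ Aux.nbr (Rm G m) (preS σR L) := by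
    intro u hu j
    obtain ⟨x, hx, hadj⟩ := hu
    have h2 := F1 x hx
    have h3 : 1 < (univ.filter (fun j : Fin m => pos (j, some x) ≤ L)).card := h2
    obtain ⟨j₁, hj₁, j₂, hj₂, hj12⟩ := Finset.one_lt_card.mp h3
    rw [mem_filter] at hj₁ hj₂
    have : ∃ jj : Fin m, jj ≠ j ∧ pos (jj, some x) ≤ L := by
      by_cases hc : j₁ = j
      · exact ⟨j₂, by rw [← hc]; exact (Ne.symm hj12), hj₂.2⟩
      · exact ⟨j₁, hc, hj₁.2⟩
    obtain ⟨jj, hjj, hjjL⟩ := this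
    exact ⟨(jj, some x), hjjL, rm_adj_cross hjj hadj⟩
  -- the copy touched at time L
  obtain ⟨jd, hjd⟩ := exists_step vK
  rw [← hL] at hjd
  have hjd_pre : ((jd, some vK) : Fin m × Option α) ∈ preS σR L := le_of_eq hjd
  have hjd_apex : ((jd, none) : Fin m × Option α) ∈ Aux.nbr (Rm G m) (preS σR L) :=
    ⟨(jd, some vK), hjd_pre, (rm_adj_apex jd vK).symm⟩
  -- cardinalities of suffix-type subsets of α
  have hcard_sfx : Fintype.card (sfxS τ k) ≤ n := set_card_le _
  have hcard_T : Fintype.card ((Aux.nbr G (preS τ k) ∩ sfxS τ k : Set α)) ≤ n := set_card_le _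
  have hcard_N : Fintype.card (Aux.nbr G (preS τ k)) ≤ n := set_card_le _
  have hcard_univ : Fintype.card ((Set.univ : Set α)) ≤ n := set_card_le _
  -- the Npre clause at time L (used in case A)
  have clauseN : ¬ ((Rm G m).induce (Aux.nbr (Rm G m) (preS σR L))).Colorable (a+2) := by
    obtain ⟨ρ, hρinj, hρmem⟩ := exists_inj_to_finset (β := (Aux.nbr G (preS τ k) : Set α))
      (univ.erase jd) (by
        rw [card_erase_of_mem (mem_univ jd), card_univ, Fintype.card_fin]
        omega)
    exact notCol_myc _ jd ρ hρinj (fun w => mem_erase.mp (hρmem w) |>.1)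
      (fun w => hdag w w.2 (ρ w)) (fun w => hdag w w.2 jd) hjd_apex S3
  have hΩ_virgin : ∀ j ∈ Ω, ∀ v ∈ sfxS τ k, L < pos (j, some v) := by
    intro j hj v hv
    rw [hΩ, mem_filter] at hj
    exact hj.2 v ((hsfxF_mem v).mpr hv)
  by_cases hB : ∀ j ∈ Ω, pos (j, none) ≤ L
  · -- CASE B : all virgin copies have their apex placed
    -- sort the virgin copies by the time their apex was placed
    set key : Fin m → ℕ := fun j => pos (j, none) with hkey
    have key_inj : ∀ {j j'}, key j = key j' → j = j' := by
      intro j j' h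
      exact congrArg Prod.fst (pos_inj h)
    set r' : Fin m → Fin m → Prop := fun x y => key x ≤ key y with hr'
    haveI : DecidableRel r' := fun x y => by unfold r'; infer_instance
    haveI : IsTotal (Fin m) r' := ⟨fun a b => le_total (key a) (key b)⟩
    haveI : IsTrans (Fin m) r' := ⟨fun a b c hab hbc => le_trans hab hbc⟩
    haveI : IsRefl (Fin m) r' := ⟨fun a => le_refl (key a)⟩
    set l : List (Fin m) := List.insertionSort r' Ω.toList with hlst
    have hperm : l.Perm Ω.toList := List.perm_insertionSort r' _
    have hnd : l.Nodup := hperm.nodup_iff.mpr (Finset.nodup_toList _)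
    have hmemΩ : ∀ x ∈ l, x ∈ Ω := by
      intro x hx
      exact Finset.mem_toList.mp (hperm.mem_iff.mp hx)
    have hsorted : List.Pairwise r' l := List.pairwise_insertionSort r' _
    have hlen : l.length = Ω.card := by rw [hperm.length_eq, Finset.length_toList]
    have hlenge : n + 3 ≤ l.length := by rw [hlen]; omega
    have hi1 : n + 1 < l.length := by omega
    have hi2 : n + 2 < l.length := by omega
    have hig : ∀ i : Fin (n+2), (i : ℕ) < l.length := by
      intro i
      have := Fin.is_lt i
      omega
    set K : ℕ := key (l.get ⟨n+1, hi1⟩) with hK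
    have hKL : K ≤ L := hB _ (hmemΩ _ (l.get_mem _))
    set g : Fin (n+2) → Fin m := fun i => l.get ⟨(i : ℕ), hig i⟩ with hg
    have hginj : Function.Injective g := by
      intro i i' hii
      rw [hg] at hii
      have h1 := (hnd.get_inj_iff).mp hii
      have h2 := congrArg (Fin.val : Fin l.length → ℕ) h1
      exact Fin.ext h2
    set Φ' : Finset (Fin m) := (Finset.univ : Finset (Fin (n+2))).image g with hΦ'
    have hΦ'sub : ∀ j ∈ Φ', j ∈ Ω := by
      intro j hj
      rw [hΦ', mem_image] at hj
      obtain ⟨i, _, hi⟩ := hj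
      rw [hg] at hi
      exact hmemΩ _ (hi ▸ l.get_mem _)
    have hΦ'key : ∀ j ∈ Φ', key j ≤ K := by
      intro j hj
      rw [hΦ', mem_image] at hj
      obtain ⟨i, _, hi⟩ := hj
      rw [← hi, hg]
      have : r' (l.get ⟨(i:ℕ), hig i⟩) (l.get ⟨n+1, hi1⟩) := by
        apply hsorted.rel_get_of_le
        rw [Fin.le_def]
        have := Fin.is_lt i
        simp only []
        omega
      exact this
    have hΦ'card : Φ'.card = n + 2 := by
      rw [hΦ', Finset.card_image_of_injective _ hginj, card_univ, Fintype.card_fin]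
    set j' : Fin m := l.get ⟨n+2, hi2⟩ with hj'
    have hj'Ω : j' ∈ Ω := hmemΩ _ (l.get_mem _)
    have hj'K : K < key j' := by
      have h1 : r' (l.get ⟨n+1, hi1⟩) (l.get ⟨n+2, hi2⟩) := by
        apply hsorted.rel_get_of_le
        rw [Fin.le_def]
        simp only []
        omega
      have h2 : l.get ⟨n+1, hi1⟩ ≠ l.get ⟨n+2, hi2⟩ := by
        intro hcon
        have h3 := (hnd.get_inj_iff).mp hcon
        have h4 := congrArg (Fin.val : Fin l.length → ℕ) h3
        simp only [] at h4
        omega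
      rcases lt_or_eq_of_le h1 with h | h
      · exact h
      · exact absurd (key_inj h) h2
    refine ⟨K, ?_, ?_, ?_⟩
    · -- bag clause at K
      obtain ⟨ρ, hρinj, hρmem⟩ := exists_inj_to_finset (β := (sfxS τ k : Set α)) Φ'
        (by rw [hΦ'card]; omega)
      apply notCol_sdr _ ρ hρinj ?_ S2
      intro w
      constructor
      · refine ⟨(ρ w, none), ?_, rm_adj_apex _ _⟩
        show pos (ρ w, none) ≤ K
        exact hΦ'key _ (hρmem w)
      · show K ≤ pos (ρ w, some (w : α))
        have := hΩ_virgin _ (hΦ'sub _ (hρmem w)) _ w.2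
        omega
    · -- suffix clause at K
      obtain ⟨ρ, hρinj, hρmem⟩ := exists_inj_to_finset (β := (sfxS τ k : Set α)) (Ω.erase j')
        (by rw [card_erase_of_mem hj'Ω]; omega)
      apply notCol_myc _ j' ρ hρinj (fun w => (mem_erase.mp (hρmem w)).1) ?_ ?_ ?_ S2
      · intro w
        show K ≤ pos (ρ w, some (w : α))
        have := hΩ_virgin _ (mem_of_mem_erase (hρmem w)) _ w.2
        omega
      · intro w
        show K ≤ pos (j', some (w : α))
        have := hΩ_virgin _ hj'Ω _ w.2
        omega
      · show K ≤ pos (j', none)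
        exact le_of_lt hj'K
    · -- neighbourhood clause at K
      obtain ⟨ρ, hρinj, hρmem⟩ := exists_inj_to_finset (β := ((Set.univ : Set α))) Φ'
        (by rw [hΦ'card]; omega)
      have hfull : ¬ (G.induce (Set.univ : Set α)).Colorable (a+2) := by
        intro hcol
        exact hChi ((colorable_univ_iff G _).mp hcol)
      apply notCol_sdr _ ρ hρinj ?_ hfull
      intro w
      refine ⟨(ρ w, none), ?_, rm_adj_apex _ _⟩
      show pos (ρ w, none) ≤ K
      exact hΦ'key _ (hρmem w)
  · -- CASE A : some virgin copy has an unplaced apex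
    push_neg at hB
    obtain ⟨j₀, hj₀Ω, hj₀⟩ := hB
    refine ⟨L, ?_, ?_, clauseN⟩
    · -- bag clause at L : trichotomy
      by_cases h1 : ∃ j ∈ Ω, (∃ u : α, pos (j, some u) ≤ L) ∧ L < pos (j, none)
      · -- a touched virgin copy with unplaced apex : Mycielskian boost
        obtain ⟨j, hjΩ, ⟨u, hu⟩, hja⟩ := h1
        obtain ⟨ρ, hρinj, hρmem⟩ := exists_inj_to_finset
          (β := ((Aux.nbr G (preS τ k) ∩ sfxS τ k : Set α))) (Ω.erase j)
          (by rw [card_erase_of_mem hjΩ]; omega)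
        apply notCol_myc _ j ρ hρinj (fun w => (mem_erase.mp (hρmem w)).1) ?_ ?_ ?_ S1
        · intro w
          refine ⟨hdag _ w.2.1 _, ?_⟩
          show L ≤ pos (ρ w, some (w : α))
          have := hΩ_virgin _ (mem_of_mem_erase (hρmem w)) _ w.2.2
          omega
        · intro w
          refine ⟨hdag _ w.2.1 _, ?_⟩
          show L ≤ pos (j, some (w : α))
          have := hΩ_virgin _ hjΩ _ w.2.2
          omega
        · refine ⟨⟨(j, some u), hu, (rm_adj_apex j u).symm⟩, ?_⟩
          show L ≤ pos (j, none)
          omega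
      · set Φ : Finset (Fin m) := Ω.filter (fun j => pos (j, none) ≤ L) with hΦ
        by_cases h2 : n ≤ Φ.card
        · -- many opened virgin copies
          obtain ⟨ρ, hρinj, hρmem⟩ := exists_inj_to_finset (β := (sfxS τ k : Set α)) Φ
            (le_trans hcard_sfx h2)
          apply notCol_sdr _ ρ hρinj ?_ S2
          intro w
          have hρΩ : ρ w ∈ Ω := mem_of_mem_filter _ (hρmem w)
          have hρa : pos (ρ w, none) ≤ L := (mem_filter.mp (hρmem w)).2
          constructor
          · exact ⟨(ρ w, none), hρa, rm_adj_apex _ _⟩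
          · show L ≤ pos (ρ w, some (w : α))
            have := hΩ_virgin _ hρΩ _ w.2
            omega
        · -- many untouched virgin copies
          set Ψ : Finset (Fin m) := Ω.filter (fun j => ¬ (pos (j, none) ≤ L)) with hΨ
          have hΨcard : n ≤ Ψ.card := by
            have := card_filter_add_card_filter_not
              (s := Ω) (fun j : Fin m => pos (j, none) ≤ L)
            rw [← hΦ] at this
            rw [hΨ]
            omega
          have hΨuntouched : ∀ j ∈ Ψ, ∀ u : α, L < pos (j, some u) := by
            intro j hj u
            rw [hΨ, mem_filter] at hj
            push_neg at h1
            have := h1 j hj.1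
            by_contra hcon
            push_neg at hcon
            exact hj.2 (this ⟨u, hcon⟩)
          obtain ⟨ρ, hρinj, hρmem⟩ := exists_inj_to_finset
            (β := (Aux.nbr G (preS τ k) : Set α)) Ψ (le_trans hcard_N hΨcard)
          apply notCol_sdr _ ρ hρinj ?_ S3
          intro w
          refine ⟨hdag _ w.2 _, ?_⟩
          show L ≤ pos (ρ w, some (w : α))
          have := hΨuntouched _ (hρmem w) (w : α)
          omega
    · -- suffix clause at L
      obtain ⟨ρ, hρinj, hρmem⟩ := exists_inj_to_finset (β := (sfxS τ k : Set α)) (Ω.erase j₀)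
        (by rw [card_erase_of_mem hj₀Ω]; omega)
      apply notCol_myc _ j₀ ρ hρinj (fun w => (mem_erase.mp (hρmem w)).1) ?_ ?_ ?_ S2
      · intro w
        show L ≤ pos (ρ w, some (w : α))
        have := hΩ_virgin _ (mem_of_mem_erase (hρmem w)) _ w.2
        omega
      · intro w
        show L ≤ pos (j₀, some (w : α))
        have := hΩ_virgin _ hj₀Ω _ w.2
        omega
      · show L ≤ pos (j₀, none)
        omega

theorem notCol_Rm (G : SimpleGraph α) (a : ℕ) (hChi : ¬ G.Colorable (a+2)) {m : ℕ}
    (hm : Fintype.card α + 1 ≤ m) : ¬ (Rm G m).Colorable (a+3) := by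
  classical
  intro h
  have h1 : ((Rm G m).induce Set.univ).Colorable (a+3) := (colorable_univ_iff _ _).mpr h
  have hm0 : 0 < m := by omega
  set j0 : Fin m := ⟨0, hm0⟩ with hj0
  obtain ⟨ρ, hρinj, hρmem⟩ := exists_inj_to_finset (β := (Set.univ : Set α)) (univ.erase j0)
    (by
      rw [card_erase_of_mem (mem_univ _), card_univ, Fintype.card_fin]
      have := set_card_le (Set.univ : Set α)
      omega)
  have hfull : ¬ (G.induce Set.univ).Colorable (a+2) := fun hc =>
    hChi ((colorable_univ_iff G _).mp hc)
  exact notCol_myc Set.univ j0 ρ hρinj (fun w => (mem_erase.mp (hρmem w)).1)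
    (fun _ => Set.mem_univ _) (fun _ => Set.mem_univ _) (Set.mem_univ _) hfull h1

end MRL

section Embed

open Function

variable {αH : Type} {H : SimpleGraph αH}

lemma emb_step {s t : ℕ}
    (A : H →g Myc (s+3)) (B : Rm H t →g Myc (s+3))
    (hAinj : Injective A) (hBinj : Injective B)
    (hAB : ∀ x r, A x ≠ B r)
    (hcross : ∀ (j : Fin t) (u v : αH), H.Adj u v → (Myc (s+3)).Adj (A u) (B (j, some v))) :
    ∃ (A' : H →g Myc (s+1+3)) (B' : Rm H (t+1) →g Myc (s+1+3)),
      Injective A' ∧ Injective B' ∧ (∀ x r, A' x ≠ B' r) ∧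
      (∀ (j : Fin (t+1)) (u v : αH), H.Adj u v →
        (Myc (s+1+3)).Adj (A' u) (B' (j, some v))) := by
  classical
  set fA : αH → MycV (s+1+3) := fun v => (some (Sum.inl (A v)) : Option (MycV (s+3) ⊕ MycV (s+3)))
    with hfA
  set fB : Fin (t+1) × Option αH → MycV (s+1+3) := fun p =>
    if h : (p.1 : ℕ) < t then
      (some (Sum.inl (B (⟨(p.1 : ℕ), h⟩, p.2))) : Option (MycV (s+3) ⊕ MycV (s+3)))
    else
      (match p.2 with
        | some v => (some (Sum.inr (A v)) : Option (MycV (s+3) ⊕ MycV (s+3)))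
        | none => (none : Option (MycV (s+3) ⊕ MycV (s+3)))) with hfB
  have hfB_old : ∀ (i : Fin (t+1)) (x : Option αH) (h : (i : ℕ) < t),
      fB (i, x) = some (Sum.inl (B (⟨(i : ℕ), h⟩, x))) := by
    intro i x h
    rw [hfB]
    simp [h]
    rfl
  have hfB_some : ∀ (i : Fin (t+1)) (v : αH) (h : ¬ ((i : ℕ) < t)),
      fB (i, some v) = some (Sum.inr (A v)) := by
    intro i v h
    rw [hfB]
    simp [h]
    rfl
  have hfB_none : ∀ (i : Fin (t+1)) (h : ¬ ((i : ℕ) < t)),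
      fB (i, none) = none := by
    intro i h
    rw [hfB]
    simp [h]
    rfl
  have hAhom : ∀ {u v}, H.Adj u v → (Myc (s+1+3)).Adj (fA u) (fA v) := by
    intro u v h
    show (mycielskian (Myc (s+3))).Adj (some (Sum.inl (A u))) (some (Sum.inl (A v)))
    exact myc_adj_base (A.map_adj h)
  have hBhom : ∀ {p q}, (Rm H (t+1)).Adj p q → (Myc (s+1+3)).Adj (fB p) (fB q) := by
    intro p q hpq
    obtain ⟨hne, hrel⟩ := (SimpleGraph.fromRel_adj _ p q).mp hpq
    obtain ⟨i, x⟩ := p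
    obtain ⟨i', x'⟩ := q
    by_cases hi : (i : ℕ) < t <;> by_cases hi' : (i' : ℕ) < t
    · rw [hfB_old i x hi, hfB_old i' x' hi']
      show (mycielskian (Myc (s+3))).Adj _ _
      refine myc_adj_base (B.map_adj ?_)
      refine (SimpleGraph.fromRel_adj _ _ _).mpr ⟨?_, ?_⟩
      · intro hcon
        have hfst : (⟨(i : ℕ), hi⟩ : Fin t) = ⟨(i' : ℕ), hi'⟩ := congrArg Prod.fst hcon
        have hval : (i : ℕ) = (i' : ℕ) := congrArg (Fin.val (n := t)) hfst
        have h2 : x = x' := congrArg Prod.snd hcon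
        exact hne (Prod.ext (Fin.ext hval) h2)
      · have hlift : ∀ (hcon : (⟨(i : ℕ), hi⟩ : Fin t) = ⟨(i' : ℕ), hi'⟩), i = i' := by
          intro hcon
          exact Fin.ext (congrArg (Fin.val (n := t)) hcon)
        rcases hrel with (⟨h1, h2⟩ | ⟨h1, u, v, hu, hv, hadj⟩) |
          (⟨h1, h2⟩ | ⟨h1, u, v, hu, hv, hadj⟩)
        · have h1' : i = i' := h1
          have hval : (i : ℕ) = (i' : ℕ) := congrArg (Fin.val (n := t+1)) h1'
          exact Or.inl (Or.inl ⟨Fin.ext hval, h2⟩)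
        · exact Or.inl (Or.inr ⟨fun hcon => h1 (hlift hcon), u, v, hu, hv, hadj⟩)
        · have h1' : i' = i := h1
          have hval : (i' : ℕ) = (i : ℕ) := congrArg (Fin.val (n := t+1)) h1'
          exact Or.inr (Or.inl ⟨Fin.ext hval, h2⟩)
        · exact Or.inr (Or.inr ⟨fun hcon => h1 (hlift hcon.symm).symm, u, v, hu, hv, hadj⟩)
    · have hit' : (i' : ℕ) = t := by have := Fin.is_lt i'; omega
      rcases hrel with (⟨h1, h2⟩ | ⟨h1, u, v, hu, hv, hadj⟩) |
        (⟨h1, h2⟩ | ⟨h1, u, v, hu, hv, hadj⟩)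
      · have h1' : i = i' := h1
        have hval : (i : ℕ) = (i' : ℕ) := congrArg (Fin.val (n := t+1)) h1'
        omega
      · subst hu; subst hv
        rw [hfB_old i _ hi, hfB_some i' v hi']
        show (mycielskian (Myc (s+3))).Adj _ _
        exact (myc_adj_shadow (hcross ⟨(i : ℕ), hi⟩ v u hadj.symm)).symm
      · have h1' : i' = i := h1
        have hval : (i' : ℕ) = (i : ℕ) := congrArg (Fin.val (n := t+1)) h1'
        omega
      · subst hu; subst hv
        rw [hfB_old i _ hi, hfB_some i' u hi']
        show (mycielskian (Myc (s+3))).Adj _ _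
        exact (myc_adj_shadow (hcross ⟨(i : ℕ), hi⟩ u v hadj)).symm
    · have hit : (i : ℕ) = t := by have := Fin.is_lt i; omega
      rcases hrel with (⟨h1, h2⟩ | ⟨h1, u, v, hu, hv, hadj⟩) |
        (⟨h1, h2⟩ | ⟨h1, u, v, hu, hv, hadj⟩)
      · have h1' : i = i' := h1
        have hval : (i : ℕ) = (i' : ℕ) := congrArg (Fin.val (n := t+1)) h1'
        omega
      · subst hu; subst hv
        rw [hfB_some i u hi, hfB_old i' _ hi']
        show (mycielskian (Myc (s+3))).Adj _ _
        exact myc_adj_shadow (hcross ⟨(i' : ℕ), hi'⟩ u v hadj)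
      · have h1' : i' = i := h1
        have hval : (i' : ℕ) = (i : ℕ) := congrArg (Fin.val (n := t+1)) h1'
        omega
      · subst hu; subst hv
        rw [hfB_some i v hi, hfB_old i' _ hi']
        show (mycielskian (Myc (s+3))).Adj _ _
        exact myc_adj_shadow (hcross ⟨(i' : ℕ), hi'⟩ v u hadj.symm)
    · have hii : i = i' := by
        apply Fin.ext
        have h1 := Fin.is_lt i
        have h2 := Fin.is_lt i'
        omega
      subst hii
      rcases hrel with (⟨h1, h2⟩ | ⟨h1, u, v, hu, hv, hadj⟩) |
        (⟨h1, h2⟩ | ⟨h1, u, v, hu, hv, hadj⟩)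
      · subst h2
        rcases x' with _ | v
        · exact absurd rfl hne
        · rw [hfB_none i hi, hfB_some i v hi']
          show (mycielskian (Myc (s+3))).Adj _ _
          exact myc_adj_apex _
      · exact absurd rfl h1
      · subst h2
        rcases x with _ | u
        · exact absurd rfl hne
        · rw [hfB_none i hi', hfB_some i u hi]
          show (mycielskian (Myc (s+3))).Adj _ _
          exact (myc_adj_apex _).symm
      · exact absurd rfl h1
  have hinj_some : ∀ a b : MycV (s+3) ⊕ MycV (s+3),
      (some a : MycV (s+1+3)) = some b → a = b := by
    intro a b hab
    exact Option.some_injective _ hab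
  have hne_none : ∀ a : MycV (s+3) ⊕ MycV (s+3), (some a : MycV (s+1+3)) ≠ none := by
    intro a hcon
    exact Option.some_ne_none _ hcon
  have hinl_inj : ∀ a b : MycV (s+3), (some (Sum.inl a) : MycV (s+1+3)) = some (Sum.inl b) →
      a = b := by
    intro a b hab
    exact Sum.inl_injective (hinj_some _ _ hab)
  have hinr_inj : ∀ a b : MycV (s+3), (some (Sum.inr a) : MycV (s+1+3)) = some (Sum.inr b) →
      a = b := by
    intro a b hab
    exact Sum.inr_injective (hinj_some _ _ hab)
  have hinl_ne_inr : ∀ a b : MycV (s+3),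
      (some (Sum.inl a) : MycV (s+1+3)) ≠ some (Sum.inr b) := by
    intro a b hcon
    exact Sum.inl_ne_inr (hinj_some _ _ hcon)
  refine ⟨⟨fA, fun {u v} h => hAhom h⟩, ⟨fB, fun {p q} h => hBhom h⟩, ?_, ?_, ?_, ?_⟩
  · intro u v h
    have h' : (some (Sum.inl (A u)) : MycV (s+1+3)) = some (Sum.inl (A v)) := h
    exact hAinj (hinl_inj _ _ h')
  · intro p q h
    have h : fB p = fB q := h
    obtain ⟨i, x⟩ := p
    obtain ⟨i', x'⟩ := q
    by_cases hi : (i : ℕ) < t <;> by_cases hi' : (i' : ℕ) < t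
    · rw [hfB_old i x hi, hfB_old i' x' hi'] at h
      have h2 := hBinj (hinl_inj _ _ h)
      have hfst : (⟨(i : ℕ), hi⟩ : Fin t) = ⟨(i' : ℕ), hi'⟩ := congrArg Prod.fst h2
      have h3 : (i : ℕ) = (i' : ℕ) := congrArg (Fin.val (n := t)) hfst
      have h4 : x = x' := congrArg Prod.snd h2
      exact Prod.ext (Fin.ext h3) h4
    · rcases x' with _ | v
      · rw [hfB_old i x hi, hfB_none i' hi'] at h
        exact absurd h (hne_none _)
      · rw [hfB_old i x hi, hfB_some i' v hi'] at h
        exact absurd h (hinl_ne_inr _ _)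
    · rcases x with _ | u
      · rw [hfB_none i hi, hfB_old i' x' hi'] at h
        exact absurd h.symm (hne_none _)
      · rw [hfB_some i u hi, hfB_old i' x' hi'] at h
        exact absurd h.symm (hinl_ne_inr _ _)
    · have hii : i = i' := by
        apply Fin.ext
        have h1 := Fin.is_lt i
        have h2 := Fin.is_lt i'
        omega
      subst hii
      rcases x with _ | u <;> rcases x' with _ | v
      · rfl
      · rw [hfB_none i hi, hfB_some i v hi'] at h
        exact absurd h.symm (hne_none _)
      · rw [hfB_some i u hi, hfB_none i hi'] at h
        exact absurd h (hne_none _)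
      · rw [hfB_some i u hi, hfB_some i v hi'] at h
        rw [hAinj (hinr_inj _ _ h)]
  · intro x r h
    have h : (some (Sum.inl (A x)) : MycV (s+1+3)) = fB r := h
    obtain ⟨i, y⟩ := r
    by_cases hi : (i : ℕ) < t
    · rw [hfB_old i y hi] at h
      exact hAB _ _ (hinl_inj _ _ h)
    · rcases y with _ | v
      · rw [hfB_none i hi] at h
        exact absurd h (hne_none _)
      · rw [hfB_some i v hi] at h
        exact absurd h (hinl_ne_inr _ _)
  · intro j u v h
    show (Myc (s+1+3)).Adj (fA u) (fB (j, some v))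
    by_cases hj : (j : ℕ) < t
    · rw [hfB_old j _ hj]
      show (mycielskian (Myc (s+3))).Adj (some (Sum.inl (A u))) _
      exact myc_adj_base (hcross ⟨(j : ℕ), hj⟩ u v h)
    · rw [hfB_some j v hj]
      show (mycielskian (Myc (s+3))).Adj (some (Sum.inl (A u))) (some (Sum.inr (A v)))
      exact (myc_adj_shadow (A.map_adj h.symm)).symm

lemma emb_lift {s0 : ℕ} (A0 : H →g Myc (s0+3)) (hA0 : Injective A0) (t : ℕ) :
    ∃ (s : ℕ) (B : Rm H t →g Myc (s+3)), Injective B := by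
  have main : ∀ t : ℕ, ∃ (s : ℕ) (A : H →g Myc (s+3)) (B : Rm H t →g Myc (s+3)),
      Injective A ∧ Injective B ∧ (∀ x r, A x ≠ B r) ∧
      (∀ (j : Fin t) (u v : αH), H.Adj u v → (Myc (s+3)).Adj (A u) (B (j, some v))) := by
    intro t
    induction t with
    | zero =>
      refine ⟨s0, A0, ⟨fun p => (Fin.elim0 p.1 : MycV (s0+3)), fun {p q} h => Fin.elim0 p.1⟩,
        hA0, fun p => Fin.elim0 p.1, fun x r => Fin.elim0 r.1, fun j => Fin.elim0 j⟩
    | succ t ih =>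
      obtain ⟨s, A, B, hAinj, hBinj, hAB, hcross⟩ := ih
      obtain ⟨A', B', h1, h2, h3, h4⟩ := emb_step A B hAinj hBinj hAB hcross
      exact ⟨s+1, A', B', h1, h2, h3, h4⟩
  obtain ⟨s, A, B, _, hBinj, _, _⟩ := main t
  exact ⟨s, B, hBinj⟩

end Embed

section Base

open Function

lemma notCol_zero_of_nonempty {α : Type*} {G : SimpleGraph α} {S : Set α}
    (hS : S.Nonempty) : ¬ (G.induce S).Colorable 0 := by
  intro ⟨C⟩
  obtain ⟨v, hv⟩ := hS
  exact (C ⟨v, hv⟩).elim0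

lemma notCol_one_of_edge {α : Type*} {G : SimpleGraph α} {S : Set α} {u v : α}
    (hu : u ∈ S) (hv : v ∈ S) (huv : G.Adj u v) : ¬ (G.induce S).Colorable 1 := by
  intro ⟨C⟩
  have h1 : C ⟨u, hu⟩ ≠ C ⟨v, hv⟩ := C.valid huv
  exact h1 (Subsingleton.elim _ _)

lemma notCol_myc3 : ¬ (Myc 3).Colorable 2 := by
  intro h
  have h2 := mycielskian_colorable (H := Myc 2) h
  obtain ⟨C⟩ := h2
  have hadj : (Myc 2).Adj (⟨0, by omega⟩ : Fin 2) (⟨1, by omega⟩ : Fin 2) := by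
    show (⊤ : SimpleGraph (Fin 2)).Adj _ _
    rw [SimpleGraph.top_adj]
    intro hcon
    simpa using hcon
  exact (C.valid hadj) (Subsingleton.elim _ _)

instance decAdjMyc2 : DecidableRel (Myc 2).Adj := fun a b =>
  decidable_of_iff (a ≠ b) (by
    show a ≠ b ↔ (⊤ : SimpleGraph (Fin 2)).Adj a b
    exact (SimpleGraph.top_adj a b).symm)

def mrel3 : MycV 3 → MycV 3 → Prop := fun a b =>
  match a, b with
  | some (Sum.inl u), some (Sum.inl v) => (Myc 2).Adj u v
  | some (Sum.inr u), some (Sum.inl v) => (Myc 2).Adj u v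
  | none, some (Sum.inr _) => True
  | _, _ => False

instance decMrel3 : ∀ a b : MycV 3, Decidable (mrel3 a b) := fun a b =>
  match a, b with
  | some (Sum.inl u), some (Sum.inl v) => (decAdjMyc2 u v : Decidable ((Myc 2).Adj u v))
  | some (Sum.inr u), some (Sum.inl v) => (decAdjMyc2 u v : Decidable ((Myc 2).Adj u v))
  | none, some (Sum.inr _) => isTrue trivial
  | none, none => isFalse (fun h => h)
  | none, some (Sum.inl _) => isFalse (fun h => h)
  | some (Sum.inl _), none => isFalse (fun h => h)
  | some (Sum.inl _), some (Sum.inr _) => isFalse (fun h => h)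
  | some (Sum.inr _), none => isFalse (fun h => h)
  | some (Sum.inr _), some (Sum.inr _) => isFalse (fun h => h)

instance decAdjMyc3 : DecidableRel (Myc 3).Adj := fun a b =>
  decidable_of_iff (a ≠ b ∧ (mrel3 a b ∨ mrel3 b a)) (by
    rcases a with _ | (u | u) <;> rcases b with _ | (v | v) <;> exact Iff.rfl)

lemma myc3_fact1 : ∀ u v : MycV 3, u ≠ v →
    ∃ w, w ≠ u ∧ ((Myc 3).Adj u w ∨ (Myc 3).Adj v w) := by decide

lemma myc3_fact2 : ∀ u : MycV 3,
    ∃ w1 w2, w1 ≠ u ∧ w2 ≠ u ∧ (Myc 3).Adj w1 w2 := by decide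

lemma myc3_fact3 : ∀ u v : MycV 3, u ≠ v →
    ∃ w1 w2, ((Myc 3).Adj u w1 ∨ (Myc 3).Adj v w1) ∧
      ((Myc 3).Adj u w2 ∨ (Myc 3).Adj v w2) ∧ (Myc 3).Adj w1 w2 := by decide

lemma card_myc3 : Fintype.card (MycV 3) = 5 := by decide

lemma str_base : Str (Myc 3) 0 := by
  intro σ
  have h0 : (0 : ℕ) < Fintype.card (MycV 3) := by rw [card_myc3]; omega
  have h1 : (1 : ℕ) < Fintype.card (MycV 3) := by rw [card_myc3]; omega
  set u : MycV 3 := σ ⟨0, h0⟩ with hu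
  set v : MycV 3 := σ ⟨1, h1⟩ with hv
  have huv : u ≠ v := by
    intro hcon
    have := σ.injective hcon
    have h2 : (0 : ℕ) = 1 := congrArg Fin.val this
    omega
  have hpre : ∀ x ∈ ({u, v} : Set (MycV 3)), x ∈ preS σ 1 := by
    rintro x (rfl | rfl)
    · show ((σ.symm (σ ⟨0, h0⟩) : Fin _) : ℕ) ≤ 1
      rw [Equiv.symm_apply_apply]
      show (0 : ℕ) ≤ 1
      omega
    · show ((σ.symm (σ ⟨1, h1⟩) : Fin _) : ℕ) ≤ 1
      rw [Equiv.symm_apply_apply]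
  have hsfx : ∀ x : MycV 3, x ≠ u → x ∈ sfxS σ 1 := by
    intro x hx
    show 1 ≤ ((σ.symm x : Fin _) : ℕ)
    by_contra hcon
    push_neg at hcon
    apply hx
    have h2 : σ.symm x = ⟨0, h0⟩ := Fin.ext (by show _ = (0 : ℕ); omega)
    rw [hu, ← h2, Equiv.apply_symm_apply]
  refine ⟨1, ?_, ?_, ?_⟩
  · -- bag clause: nonempty
    obtain ⟨w, hw1, hw2⟩ := myc3_fact1 u v huv
    apply notCol_zero_of_nonempty
    refine ⟨w, ⟨?_, hsfx w hw1⟩⟩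
    rcases hw2 with h | h
    · exact ⟨u, hpre u (by simp), h⟩
    · exact ⟨v, hpre v (by simp), h⟩
  · -- suffix clause: an edge avoiding u
    obtain ⟨w1, w2, hw1, hw2, hadj⟩ := myc3_fact2 u
    exact notCol_one_of_edge (hsfx w1 hw1) (hsfx w2 hw2) hadj
  · -- neighbourhood clause: an edge inside N({u,v})
    obtain ⟨w1, w2, hw1, hw2, hadj⟩ := myc3_fact3 u v huv
    have hm : ∀ w, ((Myc 3).Adj u w ∨ (Myc 3).Adj v w) → w ∈ Aux.nbr (Myc 3) (preS σ 1) := by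
      intro w hw
      rcases hw with h | h
      · exact ⟨u, hpre u (by simp), h⟩
      · exact ⟨v, hpre v (by simp), h⟩
    exact notCol_one_of_edge (hm w1 hw1) (hm w2 hw2) hadj

/-- the chain of graphs with growing `Str` level -/
lemma pack : ∀ c : ℕ, ∃ (Vc : Type) (iF : Fintype Vc) (Gc : SimpleGraph Vc),
    (@Str Vc iF Gc c) ∧ ¬ Gc.Colorable (c+2) ∧
    ∃ (s : ℕ) (F : Gc →g Myc (s+3)), Function.Injective F := by
  intro c
  induction c with
  | zero =>
    exact ⟨MycV 3, inferInstance, Myc 3, str_base, notCol_myc3, 0, SimpleGraph.Hom.id,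
      fun x y h => h⟩
  | succ c ih =>
    obtain ⟨Vc, iF, Gc, hstr, hchi, s, F, hFinj⟩ := ih
    letI := iF
    letI : DecidableEq Vc := Classical.decEq Vc
    refine ⟨Fin (4 * Fintype.card Vc + 20) × Option Vc, inferInstance,
      Rm Gc (4 * Fintype.card Vc + 20), ?_, ?_, ?_⟩
    · exact str_Rm Gc c hstr hchi
    · exact notCol_Rm Gc c hchi (by omega)
    · obtain ⟨s', B, hB⟩ := emb_lift F hFinj (4 * Fintype.card Vc + 20)
      exact ⟨s', B, hB⟩

end Base


end Aux

section Final

open Function Finset Aux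

theorem myc_pcn (c : ℕ) : ∃ N : ℕ, c < pathChromatic (Myc N) := by
  classical
  obtain ⟨Vc, iF, Gc, hstr, hchi, s, F, hFinj⟩ := Aux.pack c
  letI := iF
  refine ⟨s + 3, ?_⟩
  by_contra hcon
  push_neg at hcon
  set V' := MycV (s+3) with hV'
  set Γ := Myc (s+3) with hΓ
  -- the defining set is nonempty
  have hne : {k | ∃ (sB : ℕ) (B : Fin sB → Set V'), IsPathDecomp Γ B ∧
      ∀ t, (Γ.induce (B t)).Colorable k}.Nonempty := by
    refine ⟨Fintype.card ((Set.univ : Set V')), 1, fun _ => Set.univ, ⟨?_, ?_, ?_⟩, ?_⟩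
    · exact fun v => ⟨0, Set.mem_univ v⟩
    · exact fun u v _ => ⟨0, Set.mem_univ u, Set.mem_univ v⟩
    · exact fun v _ _ _ _ _ _ _ => Set.mem_univ v
    · intro t
      exact SimpleGraph.colorable_of_fintype _
  have hmem := Nat.sInf_mem hne
  obtain ⟨sB, B, hdec, hcol⟩ := hmem
  have hcolc : ∀ t, (Γ.induce (B t)).Colorable c := by
    intro t
    exact (hcol t).mono hcon
  -- the last bag containing each vertex
  have hBne : ∀ v : V', (univ.filter (fun t => v ∈ B t)).Nonempty := by
    intro v
    obtain ⟨t, ht⟩ := hdec.1 v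
    exact ⟨t, mem_filter.mpr ⟨mem_univ _, ht⟩⟩
  set r : V' → Fin sB := fun v => (univ.filter (fun t => v ∈ B t)).max' (hBne v) with hr
  have hrmem : ∀ v, v ∈ B (r v) := by
    intro v
    have := (univ.filter (fun t => v ∈ B t)).max'_mem (hBne v)
    exact (mem_filter.mp this).2
  have hrmax : ∀ v t, v ∈ B t → t ≤ r v := by
    intro v t ht
    exact Finset.le_max' _ t (mem_filter.mpr ⟨mem_univ _, ht⟩)
  set key : V' → ℕ := fun v => ((r v : Fin sB) : ℕ) with hkey
  obtain ⟨σ, hσ⟩ := exists_sorted_equiv key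
  -- the derived ordering on Vc, by position of the image
  set keyc : Vc → ℕ := fun w => ((σ.symm (F w) : Fin _) : ℕ) with hkeyc
  obtain ⟨τ, hτ⟩ := exists_sorted_equiv keyc
  obtain ⟨k, S1, S2, S3⟩ := hstr τ
  have hk : k < Fintype.card Vc := by
    by_contra hcon2
    apply S2
    have hempty : sfxS τ k = ∅ := by
      ext v
      simp only [sfxS, Set.mem_setOf_eq, Set.mem_empty_iff_false, iff_false, not_le]
      calc ((τ.symm v : Fin _) : ℕ) < Fintype.card Vc := Fin.is_lt _
      _ ≤ k := by omega
    rw [hempty]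
    exact colorable_induce_empty Gc _
  set vK : Vc := τ ⟨k, hk⟩ with hvK
  set L : ℕ := keyc vK with hL
  have hpre_im : ∀ y ∈ preS τ k, ((σ.symm (F y) : Fin _) : ℕ) ≤ L := by
    intro y hy
    have h1 : (τ.symm y) ≤ (⟨k, hk⟩ : Fin _) := hy
    have := hτ _ _ h1
    simpa using this
  have hsfx_im : ∀ y ∈ sfxS τ k, L ≤ ((σ.symm (F y) : Fin _) : ℕ) := by
    intro y hy
    have h1 : (⟨k, hk⟩ : Fin _) ≤ (τ.symm y) := hy
    have := hτ _ _ h1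
    simpa using this
  -- everything in the bag at position L lies in the decomposition bag r (F vK)
  set tb : Fin sB := r (F vK) with htb
  have hfinal : ∀ x : V', x ∈ Aux.nbr Γ (preS σ L) → L ≤ ((σ.symm x : Fin _) : ℕ) →
      x ∈ B tb := by
    intro x hx1 hx2
    obtain ⟨y, hy, hadj⟩ := hx1
    obtain ⟨t, hty, htx⟩ := hdec.2.1 y x hadj
    have h1 : (t : ℕ) ≤ key y := by
      have := hrmax y t hty
      exact this
    have h2 : key y ≤ key (F vK) := by
      have h3 : σ.symm y ≤ σ.symm (F vK) := by
        rw [Fin.le_def]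
        exact le_trans hy (le_of_eq rfl)
      have := hσ _ _ h3
      simpa using this
    have h4 : key (F vK) ≤ key x := by
      have h5 : σ.symm (F vK) ≤ σ.symm x := by
        rw [Fin.le_def]
        exact hx2
      have := hσ _ _ h5
      simpa using this
    refine hdec.2.2 x t tb (r x) ?_ ?_ htx (hrmem x)
    · rw [Fin.le_def]
      exact le_trans h1 h2
    · rw [Fin.le_def]
      exact h4
  -- transfer the colouring of that bag to the critical set of Gc
  apply S1
  refine colorable_induce_of_hom (G := Γ) (S := B tb)
    ⟨fun w => F w.val, ?_⟩ ?_ (hcolc tb)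
  · intro w w' hww
    exact F.map_adj hww
  · intro w
    apply hfinal
    · obtain ⟨y, hy, hadj⟩ := w.2.1
      exact ⟨F y, hpre_im y hy, F.map_adj hadj⟩
    · exact hsfx_im w w.2.2

end Final

/-- Corollary 5: for every positive integer `c` there is `N` with `χ_P(M_N) > c`. -/
theorem stmt_17 (c : ℕ) (hc : 1 ≤ c) :
    ∃ N : ℕ, c < pathChromatic (Myc N) := myc_pcn c
end

section
/- Let (P, B) = B_1,...,B_s be a path-decomposition of a graph G, and let σ = v_1,...,v_n be an enumeration of V(G) such that whenever the last bag containing u precedes the last bag containing v, u precedes v in σ. Then for each i ∈ [n], the bag X_i = N[{v_1,...,v_i}] \ {v_1,...,v_{i-1}} is contained in the last bag of (P, B) containing v_i; consequently the chromatic number of P_σ^G is at most that of (P, B). -/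
open SimpleGraph

universe u
variable {V : Type u}

/-- Proof of Lemma 1: if `σ` orders the vertices compatibly with the order of their last
bags in a path-decomposition `B`, then each `X_i` is contained in the last bag containing
`v_i`; consequently the chromatic number of `P_σ^G` is at most that of `B`. -/
theorem stmt_18 {V : Type u} (G : SimpleGraph V) {s n : ℕ}
    (B : Fin s → Set V) (hB : IsPathDecomp G B) (σ : Fin n ≃ V)
    (horder : ∀ (u v : V) (tu tv : Fin s),
      (u ∈ B tu ∧ ∀ t, u ∈ B t → t ≤ tu) →
      (v ∈ B tv ∧ ∀ t, v ∈ B t → t ≤ tv) →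
      tu < tv → σ.symm u < σ.symm v) :
    (∀ i : Fin n, ∃ t : Fin s,
      (σ i ∈ B t ∧ ∀ t', σ i ∈ B t' → t' ≤ t) ∧ bagX G σ i ⊆ B t) ∧
    decompChrom G σ ≤ sInf {k | ∀ t, (G.induce (B t)).Colorable k} := by
  classical
  have hlast : ∀ v : V, ∃ t, v ∈ B t ∧ ∀ t', v ∈ B t' → t' ≤ t := by
    intro v
    obtain ⟨t0, ht0⟩ := hB.1 v
    obtain ⟨t, ht, hmax⟩ := Set.Finite.exists_maximalFor id {t | v ∈ B t}
      (Set.toFinite _) ⟨t0, ht0⟩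
    refine ⟨t, ht, fun t' ht' => ?_⟩
    by_contra h
    push_neg at h
    exact absurd (hmax ht' h.le) (not_le.mpr h)
  have hmain : ∀ i : Fin n, ∃ t : Fin s,
      (σ i ∈ B t ∧ ∀ t', σ i ∈ B t' → t' ≤ t) ∧ bagX G σ i ⊆ B t := by
    intro i
    obtain ⟨t, ht, htmax⟩ := hlast (σ i)
    refine ⟨t, ⟨ht, htmax⟩, ?_⟩
    rintro w ⟨hw1, hw2⟩
    rcases hw1 with hmem | hadj
    · obtain ⟨j, hj, rfl⟩ := hmem
      rcases lt_or_eq_of_le hj with h | h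
      · exact absurd ⟨j, h, rfl⟩ hw2
      · subst h; exact ht
    · obtain ⟨u, ⟨j, hj, rfl⟩, hadj⟩ := hadj
      obtain ⟨tu, htu, htumax⟩ := hlast (σ j)
      obtain ⟨tw, htw, htwmax⟩ := hlast w
      have htut : tu ≤ t := by
        by_contra h
        push_neg at h
        have := horder (σ i) (σ j) t tu ⟨ht, htmax⟩ ⟨htu, htumax⟩ h
        simp only [Equiv.symm_apply_apply] at this
        exact absurd this (not_lt.mpr hj)
      have httw : t ≤ tw := by
        by_contra h
        push_neg at h
        have := horder w (σ i) tw t ⟨htw, htwmax⟩ ⟨ht, htmax⟩ h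
        simp only [Equiv.symm_apply_apply] at this
        exact hw2 ⟨σ.symm w, this, (σ.apply_symm_apply w).symm⟩
      obtain ⟨t', hu', hw'⟩ := hB.2.1 (σ j) w hadj
      exact hB.2.2 w t' t tw ((htumax t' hu').trans htut) httw hw' htw
  refine ⟨hmain, ?_⟩
  have hne : n ∈ {k | ∀ t, (G.induce (B t)).Colorable k} := by
    intro t
    exact ⟨⟨fun v => σ.symm v.1, fun {a b} hab => by
      have : G.Adj a.1 b.1 := hab
      exact fun hc => this.ne (σ.symm.injective hc)⟩⟩
  have hK := Nat.sInf_mem ⟨n, hne⟩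
  apply Nat.sInf_le
  intro ℓ
  obtain ⟨t, _, hsub⟩ := hmain ℓ
  obtain ⟨C⟩ := hK t
  exact ⟨⟨fun v => C ⟨v.1, hsub v.2⟩, fun {a b} hab => by
    have hab' : (G.induce (B t)).Adj ⟨a.1, hsub a.2⟩ ⟨b.1, hsub b.2⟩ := hab
    exact C.valid hab'⟩⟩
end

section
/- Let G be a graph on n vertices with an enumeration σ = v_1,...,v_n such that the path-decomposition P_σ^G = X_1,...,X_n has chromatic number k. Let μ be the enumeration of V(R_m(G)) given by (1,v_1),...,(m,v_1),(1,v_2),...,(m,v_n),(1,v_0),...,(m,v_0). Then for all i ∈ [m] and j ∈ [n], the bag Y_{(i,v_j)} of P_μ^{R_m(G)} satisfies χ(⟨Y_{(i,v_j)}⟩) ≤ χ(G[X_j]) + 1; consequently the chromatic number of P_μ^{R_m(G)} is at most k+1. -/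
open SimpleGraph

universe u
variable {V : Type u}

section Aux

variable {n m : ℕ}

lemma idx_lt (hm : 0 < m) (j : Fin n) (i : Fin m) : (j : ℕ) * m + (i : ℕ) < m * (n + 1) := by
  have h1 : (j : ℕ) + 1 ≤ n := j.isLt
  calc (j : ℕ) * m + (i : ℕ) < (j : ℕ) * m + m := Nat.add_lt_add_left i.isLt _
    _ = ((j : ℕ) + 1) * m := (Nat.succ_mul _ _).symm
    _ ≤ n * m := Nat.mul_le_mul_right m h1
    _ ≤ m * (n + 1) := by rw [Nat.mul_succ, Nat.mul_comm n m]; exact Nat.le_add_right _ _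

lemma idx_lt' (j : Fin n) (i : Fin m) : (j : ℕ) * m + (i : ℕ) < n * m := by
  have h1 : (j : ℕ) + 1 ≤ n := j.isLt
  calc (j : ℕ) * m + (i : ℕ) < (j : ℕ) * m + m := Nat.add_lt_add_left i.isLt _
    _ = ((j : ℕ) + 1) * m := (Nat.succ_mul _ _).symm
    _ ≤ n * m := Nat.mul_le_mul_right m h1

lemma mod_fact (hm : 0 < m) (a : ℕ) (b : Fin m) : (a * m + (b : ℕ)) % m = (b : ℕ) := by
  rw [Nat.add_comm, Nat.add_mul_mod_self_right, Nat.mod_eq_of_lt b.isLt]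

lemma div_fact (hm : 0 < m) (a : ℕ) (b : Fin m) : (a * m + (b : ℕ)) / m = a := by
  rw [Nat.add_comm, Nat.add_mul_div_right _ _ hm, Nat.div_eq_of_lt b.isLt, Nat.zero_add]

lemma mu_eq' (hm : 0 < m) (σ : Fin n ≃ V) (μ : Fin (m * (n + 1)) ≃ (Fin m × Option V))
    (hμ : ∀ ℓ : Fin (m * (n + 1)), μ ℓ =
      (⟨(ℓ : ℕ) % m, Nat.mod_lt _ hm⟩,
        if h : (ℓ : ℕ) < n * m then
          some (σ ⟨(ℓ : ℕ) / m, Nat.div_lt_of_lt_mul (Nat.mul_comm n m ▸ h)⟩) else none))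
    (ℓ : Fin (m * (n + 1))) (h : (ℓ : ℕ) < n * m)
    (i' : Fin m) (hi' : (i' : ℕ) = (ℓ : ℕ) % m)
    (j' : Fin n) (hj' : (j' : ℕ) = (ℓ : ℕ) / m) :
    μ ℓ = (i', some (σ j')) := by
  rw [hμ ℓ, dif_pos h]
  exact Prod.ext (Fin.ext hi'.symm) (congrArg some (congrArg σ (Fin.ext hj'.symm)))

/-- Claim A: every vertex of a bag of `μ` at a position `< n*m` is either a `v₀`-copy
or a copy of a vertex of the corresponding bag of `σ`. -/
lemma claimA (G : SimpleGraph V) (hm : 0 < m) (σ : Fin n ≃ V)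
    (μ : Fin (m * (n + 1)) ≃ (Fin m × Option V))
    (hμ : ∀ ℓ : Fin (m * (n + 1)), μ ℓ =
      (⟨(ℓ : ℕ) % m, Nat.mod_lt _ hm⟩,
        if h : (ℓ : ℕ) < n * m then
          some (σ ⟨(ℓ : ℕ) / m, Nat.div_lt_of_lt_mul (Nat.mul_comm n m ▸ h)⟩) else none))
    (ℓ : Fin (m * (n + 1))) (hℓ : (ℓ : ℕ) < n * m)
    (j : Fin n) (hj : (j : ℕ) = (ℓ : ℕ) / m) :
    bagX (Rm G m) μ ℓ ⊆ {p | p.2 = none ∨ ∃ w ∈ bagX G σ j, p.2 = some w} := by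
  intro p hp
  simp only [bagX, closedNbhd, Set.mem_diff, Set.mem_union, Set.mem_setOf_eq] at hp
  obtain ⟨hpin, hpout⟩ := hp
  rcases hpin with ⟨ℓ', hle, hp⟩ | ⟨q, ⟨ℓ', hle, hq⟩, hadj⟩
  · -- p is itself one of the first vertices; it must be the ℓ-th one
    have heq : ℓ' = ℓ := by
      rcases lt_or_eq_of_le hle with hlt | h
      · exact absurd ⟨ℓ', hlt, hp⟩ hpout
      · exact h
    subst heq
    have hp2 : p.2 = some (σ j) := by
      rw [hp, mu_eq' hm σ μ hμ ℓ' hℓ ⟨(ℓ' : ℕ) % m, Nat.mod_lt _ hm⟩ rfl j hj]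
    refine Or.inr ⟨σ j, ?_, hp2⟩
    simp only [bagX, closedNbhd, Set.mem_diff, Set.mem_union, Set.mem_setOf_eq]
    refine ⟨Or.inl ⟨j, le_refl j, rfl⟩, ?_⟩
    rintro ⟨j'', hlt2, heq2⟩
    cases σ.injective heq2
    exact lt_irrefl _ hlt2
  · -- p is adjacent to the ℓ'-th vertex, ℓ' ≤ ℓ
    have hle' : (ℓ' : ℕ) ≤ (ℓ : ℕ) := hle
    have hlt' : (ℓ' : ℕ) < n * m := lt_of_le_of_lt hle' hℓ
    set j' : Fin n := ⟨(ℓ' : ℕ) / m, Nat.div_lt_of_lt_mul (Nat.mul_comm n m ▸ hlt')⟩ with hj'def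
    have hq2 : q.2 = some (σ j') := by
      rw [hq, mu_eq' hm σ μ hμ ℓ' hlt' ⟨(ℓ' : ℕ) % m, Nat.mod_lt _ hm⟩ rfl j' rfl]
    simp only [Rm, SimpleGraph.fromRel_adj] at hadj
    obtain ⟨hne, hrel⟩ := hadj
    have key : p.2 = none ∨ ∃ w, p.2 = some w ∧ G.Adj (σ j') w := by
      rcases hrel with (⟨h1, h2⟩ | ⟨h1, u, v, h2, h3, h4⟩) | (⟨h1, h2⟩ | ⟨h1, u, v, h2, h3, h4⟩)
      · rw [hq2] at h2; exact nomatch h2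
      · obtain rfl := Option.some.inj (hq2.symm.trans h2)
        exact Or.inr ⟨v, h3, h4⟩
      · exact Or.inl h2
      · obtain rfl := Option.some.inj (hq2.symm.trans h3)
        exact Or.inr ⟨u, h2, h4.symm⟩
    rcases key with h | ⟨w, hw, hGadj⟩
    · exact Or.inl h
    refine Or.inr ⟨w, ?_, hw⟩
    simp only [bagX, closedNbhd, Set.mem_diff, Set.mem_union, Set.mem_setOf_eq]
    refine ⟨Or.inr ⟨σ j', ⟨j', ?_, rfl⟩, hGadj⟩, ?_⟩
    · -- j' ≤ j
      rw [Fin.le_def]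
      show (ℓ' : ℕ) / m ≤ (j : ℕ)
      rw [hj]
      exact Nat.div_le_div_right hle'
    · rintro ⟨j'', hlt2, rfl⟩
      have hpeq : p = μ ⟨(j'' : ℕ) * m + (p.1 : ℕ), idx_lt hm j'' p.1⟩ := by
        rw [mu_eq' hm σ μ hμ _ (idx_lt' j'' p.1) p.1 (mod_fact hm _ _).symm j''
          (div_fact hm _ _).symm]
        exact Prod.ext rfl hw
      have hidxlt : (j'' : ℕ) * m + (p.1 : ℕ) < (ℓ : ℕ) := by
        calc (j'' : ℕ) * m + (p.1 : ℕ) < ((j'' : ℕ) + 1) * m := by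
              rw [Nat.succ_mul]; exact Nat.add_lt_add_left p.1.isLt _
          _ ≤ (j : ℕ) * m := Nat.mul_le_mul_right m (Fin.lt_def.mp hlt2)
          _ = ((ℓ : ℕ) / m) * m := by rw [hj]
          _ ≤ (ℓ : ℕ) := Nat.div_mul_le_self _ _
      exact hpout ⟨⟨_, idx_lt hm j'' p.1⟩, Fin.lt_def.mpr hidxlt, hpeq⟩

/-- Bags of `μ` at positions `≥ n*m` consist only of `v₀`-copies. -/
lemma claimNone (G : SimpleGraph V) (hm : 0 < m) (σ : Fin n ≃ V)
    (μ : Fin (m * (n + 1)) ≃ (Fin m × Option V))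
    (hμ : ∀ ℓ : Fin (m * (n + 1)), μ ℓ =
      (⟨(ℓ : ℕ) % m, Nat.mod_lt _ hm⟩,
        if h : (ℓ : ℕ) < n * m then
          some (σ ⟨(ℓ : ℕ) / m, Nat.div_lt_of_lt_mul (Nat.mul_comm n m ▸ h)⟩) else none))
    (ℓ : Fin (m * (n + 1))) (hℓ : ¬ (ℓ : ℕ) < n * m) :
    bagX (Rm G m) μ ℓ ⊆ {p | p.2 = none ∨ ∃ w ∈ (∅ : Set V), p.2 = some w} := by
  intro p hp
  simp only [bagX, Set.mem_diff, Set.mem_setOf_eq] at hp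
  obtain ⟨-, hpout⟩ := hp
  refine Or.inl ?_
  rcases hpo : p.2 with _ | w
  · rfl
  · exfalso
    have hpeq : p = μ ⟨(σ.symm w : ℕ) * m + (p.1 : ℕ), idx_lt hm _ _⟩ := by
      rw [mu_eq' hm σ μ hμ _ (idx_lt' _ _) p.1 (mod_fact hm _ _).symm (σ.symm w)
        (div_fact hm _ _).symm, Equiv.apply_symm_apply]
      exact Prod.ext rfl hpo
    exact hpout ⟨⟨_, idx_lt hm (σ.symm w) p.1⟩,
      Fin.lt_def.mpr (lt_of_lt_of_le (idx_lt' _ _) (Nat.le_of_not_lt hℓ)), hpeq⟩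

open Classical in
/-- The coloring of a bag of `R_m(G)`: copies of `X`-vertices get the color of the original,
`v₀`-copies get the new color. -/
noncomputable def colF {K : ℕ} (X : Set V) (C : ∀ w ∈ X, Fin K) : Option V → Fin (K + 1)
  | none => Fin.last K
  | some w => if h : w ∈ X then (C w h).castSucc else ⟨0, Nat.succ_pos K⟩

lemma colF_none {K : ℕ} (X : Set V) (C : ∀ w ∈ X, Fin K) : colF X C none = Fin.last K := rfl

lemma colF_some {K : ℕ} (X : Set V) (C : ∀ w ∈ X, Fin K) (w : V) (h : w ∈ X) :
    colF X C (some w) = (C w h).castSucc := dif_pos h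

/-- Claim B: a set of vertices of `R_m(G)` consisting of copies of vertices of `X` and
`v₀`-copies induces a subgraph colorable with one more color than `G[X]`. -/
lemma claimB {m K : ℕ} (G : SimpleGraph V) {X : Set V} {S : Set (Fin m × Option V)}
    (hS : S ⊆ {p | p.2 = none ∨ ∃ w ∈ X, p.2 = some w})
    (hX : (G.induce X).Colorable K) :
    ((Rm G m).induce S).Colorable (K + 1) := by
  obtain ⟨C⟩ := hX
  refine ⟨SimpleGraph.Coloring.mk (fun v => colF X (fun w h => C ⟨w, h⟩) v.val.2) ?_⟩
  rintro ⟨p, hp⟩ ⟨q, hq⟩ hadj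
  have hadj' : (Rm G m).Adj p q := hadj
  simp only [Rm, SimpleGraph.fromRel_adj] at hadj'
  obtain ⟨hne, hrel⟩ := hadj'
  show colF X (fun w h => C ⟨w, h⟩) p.2 ≠ colF X (fun w h => C ⟨w, h⟩) q.2
  rcases hS hp with hp0 | ⟨w, hwX, hw⟩ <;> rcases hS hq with hq0 | ⟨w', hw'X, hw'⟩
  · exfalso
    rcases hrel with (⟨h1, h2⟩ | ⟨h1, u, v, h2, h3, h4⟩) | (⟨h1, h2⟩ | ⟨h1, u, v, h2, h3, h4⟩)
    · exact hne (Prod.ext h1 (hp0.trans hq0.symm))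
    · rw [hp0] at h2; exact nomatch h2
    · exact hne (Prod.ext h1.symm (hp0.trans hq0.symm))
    · rw [hq0] at h2; exact nomatch h2
  · rw [hp0, hw', colF_none, colF_some _ _ _ hw'X]
    exact (Fin.castSucc_lt_last _).ne'
  · rw [hw, hq0, colF_none, colF_some _ _ _ hwX]
    exact (Fin.castSucc_lt_last _).ne
  · have hGadj : G.Adj w w' := by
      rcases hrel with (⟨h1, h2⟩ | ⟨h1, u, v, h2, h3, h4⟩) | (⟨h1, h2⟩ | ⟨h1, u, v, h2, h3, h4⟩)
      · rw [hw] at h2; exact nomatch h2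
      · obtain rfl := Option.some.inj (hw.symm.trans h2)
        obtain rfl := Option.some.inj (hw'.symm.trans h3)
        exact h4
      · rw [hw'] at h2; exact nomatch h2
      · obtain rfl := Option.some.inj (hw'.symm.trans h2)
        obtain rfl := Option.some.inj (hw.symm.trans h3)
        exact h4.symm
    have hadj2 : (G.induce X).Adj ⟨w, hwX⟩ ⟨w', hw'X⟩ := hGadj
    rw [hw, hw', colF_some _ _ _ hwX, colF_some _ _ _ hw'X]
    intro hEq
    exact C.valid hadj2 (Fin.castSucc_inj.mp hEq)

lemma chrom_colorable {W : Type u} [Fintype W] (H : SimpleGraph W) (S : Set W) :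
    (H.induce S).Colorable (chrom H S) := by
  haveI : Fintype ↥S := Fintype.ofFinite _
  have h := Nat.sInf_mem (s := {k | (H.induce S).Colorable k})
    ⟨Fintype.card ↥S, (H.induce S).colorable_of_fintype⟩
  exact h

lemma decomp_colorable {W : Type u} [Fintype W] (H : SimpleGraph W) {N : ℕ}
    (σ : Fin N ≃ W) (t : Fin N) :
    (H.induce (bagX H σ t)).Colorable (decompChrom H σ) := by
  have h : decompChrom H σ ∈ {k | ∀ ℓ, (H.induce (bagX H σ ℓ)).Colorable k} := by
    refine Nat.sInf_mem ⟨Fintype.card W, fun s => ?_⟩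
    haveI : Fintype ↥(bagX H σ s) := Fintype.ofFinite _
    exact ((H.induce (bagX H σ s)).colorable_of_fintype).mono
      (Fintype.card_le_of_injective _ Subtype.val_injective)
  exact h t

end Aux

/-- Claims 2 and 3 in the proof of Theorem 2: with `μ` the enumeration
`(1,v₁),…,(m,v₁),…,(1,vₙ),…,(m,vₙ),(1,v₀),…,(m,v₀)` of `R_m(G)`, each bag `Y_{(i,v_j)}`
satisfies `χ(⟨Y_{(i,v_j)}⟩) ≤ χ(X_j) + 1`, and hence `P_μ^{R_m(G)}` has chromatic number
at most `k + 1`. -/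
theorem stmt_19 {V : Type u} [Fintype V] (G : SimpleGraph V) {n m k : ℕ}
    (hn : Fintype.card V = n) (hm : 0 < m) (σ : Fin n ≃ V)
    (hk : decompChrom G σ = k)
    (μ : Fin (m * (n + 1)) ≃ (Fin m × Option V))
    (hμ : ∀ ℓ : Fin (m * (n + 1)), μ ℓ =
      (⟨(ℓ : ℕ) % m, Nat.mod_lt _ hm⟩,
        if h : (ℓ : ℕ) < n * m then
          some (σ ⟨(ℓ : ℕ) / m, Nat.div_lt_of_lt_mul (Nat.mul_comm n m ▸ h)⟩) else none)) :
    (∀ (i : Fin m) (j : Fin n),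
      chrom (Rm G m) (bagX (Rm G m) μ (μ.symm (i, some (σ j)))) ≤
        chrom G (bagX G σ j) + 1) ∧
    decompChrom (Rm G m) μ ≤ k + 1 := by
  constructor
  · intro i j
    have hsymm : μ.symm (i, some (σ j)) = ⟨(j : ℕ) * m + (i : ℕ), idx_lt hm j i⟩ :=
      (Equiv.symm_apply_eq μ).mpr
        (mu_eq' hm σ μ hμ _ (idx_lt' j i) i (mod_fact hm j i).symm j (div_fact hm j i).symm).symm
    rw [hsymm]
    exact Nat.sInf_le
      (claimB G (claimA G hm σ μ hμ _ (idx_lt' j i) j (div_fact hm (j : ℕ) i).symm)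
        (chrom_colorable G (bagX G σ j)))
  · subst hk
    refine Nat.sInf_le (fun ℓ => ?_)
    by_cases hc : (ℓ : ℕ) < n * m
    · exact claimB G
        (claimA G hm σ μ hμ ℓ hc ⟨(ℓ : ℕ) / m, Nat.div_lt_of_lt_mul (Nat.mul_comm n m ▸ hc)⟩ rfl)
        (decomp_colorable G σ _)
    · haveI : IsEmpty (↥(∅ : Set V)) := ⟨fun x => x.2⟩
      have h0 : (G.induce (∅ : Set V)).Colorable 0 :=
        ⟨SimpleGraph.Coloring.mk isEmptyElim (fun {a b} _ => isEmptyElim a)⟩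
      exact (claimB G (claimNone G hm σ μ hμ ℓ hc) h0).mono
        (Nat.succ_le_succ (Nat.zero_le _))
end
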